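/- For an element g of a k-peg Hanoi group G with generating set S, the following are equivalent: (1) g|_j = g for some j ∈ X_k; (2) some representation of g has nonempty essential set; (3) every minimal representation of g has nonempty essential set. Moreover, the prenucleus of G (the set of all g satisfying these conditions) is state-closed: if g lies in the prenucleus then g|_j lies in the prenucleus for every j ∈ X_k. -/

import Mathlib

/-!
Common framework: automorphisms of the rooted tree `X_k^*`, root permutations,
sections, self-similar and contracting groups, Hanoi automorphisms and Hanoi
groups, following Makisumi–Stadnyk–Steinhurst, "Modified Hanoi Towers Groups
and Limit Spaces".

A word `x_n … x_1` over the alphabet `X_k = Fin k` is encoded as the list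
`[x_n, …, x_1]`, whose head `x_n` is the first letter, i.e. the letter that a
tree automorphism reads (and permutes) first.
-/

namespace Hanoi

/-- Words over the alphabet `X_k = Fin k`. -/
abbrev Word (k : ℕ) := List (Fin k)

/-- `e` is an automorphism of the rooted tree `X_k^*`: it fixes the root
(the empty word), preserves word length (levels) and preserves the tree
structure (words sharing an initial segment of length `n` are sent to words
sharing an initial segment of length `n`). -/
def IsTreeAut {k : ℕ} (e : Equiv.Perm (Word k)) : Prop :=
  (∀ w : Word k, (e w).length = w.length) ∧
    ∀ (w v : Word k) (n : ℕ), w.take n = v.take n → (e w).take n = (e v).take n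

open Classical in
/-- The root permutation `σ_e` of a tree automorphism `e` (its action on
one-letter words). -/
noncomputable def rootPerm {k : ℕ} (e : Equiv.Perm (Word k)) : Equiv.Perm (Fin k) :=
  if h : Function.Bijective (fun x : Fin k => ((e [x]).head?.getD x)) then
    Equiv.ofBijective _ h
  else 1

open Classical in
/-- The section `e|_x` of `e` at a letter `x`: the unique automorphism with
`e (x :: w) = σ_e x :: (e|_x) w` for all words `w`. -/
noncomputable def sec {k : ℕ} (e : Equiv.Perm (Word k)) (x : Fin k) : Equiv.Perm (Word k) :=
  if h : Function.Bijective (fun w : Word k => (e (x :: w)).tail) then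
    Equiv.ofBijective _ h
  else 1

/-- The section `e|_v` of `e` at a word `v = x_n … x_1`, defined by
`e|_v = (e|_{x_n})|_{x_{n-1} … x_1}`. -/
noncomputable def secW {k : ℕ} (e : Equiv.Perm (Word k)) : Word k → Equiv.Perm (Word k)
  | [] => e
  | x :: v => secW (sec e x) v

/-- A subgroup of the permutations of `X_k^*` is self-similar if it consists of
tree automorphisms and is closed under taking sections. -/
def IsSelfSimilar {k : ℕ} (G : Subgroup (Equiv.Perm (Word k))) : Prop :=
  (∀ g ∈ G, IsTreeAut g) ∧ ∀ g ∈ G, ∀ x : Fin k, sec g x ∈ G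

/-- A self-similar group `G` is contracting if there is a finite subset `N ⊆ G`
such that for every `g ∈ G` all sections of `g` at words of length at least
some `m` lie in `N`. -/
def IsContracting {k : ℕ} (G : Subgroup (Equiv.Perm (Word k))) : Prop :=
  ∃ N : Set (Equiv.Perm (Word k)), N.Finite ∧ N ⊆ (G : Set (Equiv.Perm (Word k))) ∧
    ∀ g ∈ G, ∃ m : ℕ, ∀ v : Word k, m ≤ v.length → secW g v ∈ N

/-- `N` is the nucleus of `G`: a smallest finite subset of `G` catching all
deep enough sections of every element of `G`. -/
def IsNucleus {k : ℕ} (G : Subgroup (Equiv.Perm (Word k)))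
    (N : Set (Equiv.Perm (Word k))) : Prop :=
  (N.Finite ∧ N ⊆ (G : Set (Equiv.Perm (Word k))) ∧
    ∀ g ∈ G, ∃ m : ℕ, ∀ v : Word k, m ≤ v.length → secW g v ∈ N) ∧
  ∀ N' : Set (Equiv.Perm (Word k)), N'.Finite → N' ⊆ (G : Set (Equiv.Perm (Word k))) →
    (∀ g ∈ G, ∃ m : ℕ, ∀ v : Word k, m ≤ v.length → secW g v ∈ N') → N ⊆ N'

/-- `a` is a Hanoi automorphism with set of inactive pegs `Q`: the section at
each active peg (element of the complement of `Q`) is trivial, the section at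
each inactive peg is `a` itself, and the root permutation fixes each inactive
peg. -/
def IsHanoiWith {k : ℕ} (a : Equiv.Perm (Word k)) (Q : Set (Fin k)) : Prop :=
  IsTreeAut a ∧ (∀ i ∉ Q, sec a i = 1) ∧ (∀ j ∈ Q, sec a j = a) ∧
    ∀ j ∈ Q, rootPerm a j = j

/-- `a` is a `k`-peg Hanoi automorphism. -/
def IsHanoiAut {k : ℕ} (a : Equiv.Perm (Word k)) : Prop := ∃ Q, IsHanoiWith a Q

open Classical in
/-- The set `Q_a` of inactive pegs of a Hanoi automorphism `a`; by convention
`Q_1 = X_k` (for `a ≠ 1` the set of inactive pegs is uniquely determined). -/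
noncomputable def inactivePegs {k : ℕ} (a : Equiv.Perm (Word k)) : Set (Fin k) :=
  if a = 1 then Set.univ
  else if h : ∃ Q, IsHanoiWith a Q then h.choose else ∅

/-- `S_{k,q}`: the set of Hanoi automorphisms over `X_k` with exactly `q`
inactive pegs. -/
noncomputable def hanoiSet (k q : ℕ) : Set (Equiv.Perm (Word k)) :=
  {a | IsHanoiAut a ∧ (inactivePegs a).ncard = q}

/-- `L = [s_n, …, s_1]` is a representation of `g` over the generating set `S`:
each `s_i ∈ S ∪ S⁻¹` and `g = s_n ⋯ s_2 s_1`. -/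
def IsRepOf {k : ℕ} (S : Set (Equiv.Perm (Word k))) (L : List (Equiv.Perm (Word k)))
    (g : Equiv.Perm (Word k)) : Prop :=
  (∀ s ∈ L, s ∈ S ∨ s⁻¹ ∈ S) ∧ L.prod = g

/-- The length `l(g)` of `g` with respect to `S`: the length of a minimal
representation (`0` for the identity). -/
noncomputable def repLength {k : ℕ} (S : Set (Equiv.Perm (Word k)))
    (g : Equiv.Perm (Word k)) : ℕ :=
  sInf {n | ∃ L, IsRepOf S L g ∧ L.length = n}

/-- The essential set of a representation: the intersection of the sets of
inactive pegs of its letters. -/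
noncomputable def essSet {k : ℕ} (L : List (Equiv.Perm (Word k))) : Set (Fin k) :=
  ⋂ s ∈ L, inactivePegs s

/-- The prenucleus of `G`: the set of elements `g ∈ G` with `g|_j = g` for some
letter `j`. -/
noncomputable def preNucleus {k : ℕ} (G : Subgroup (Equiv.Perm (Word k))) :
    Set (Equiv.Perm (Word k)) :=
  {g | g ∈ G ∧ ∃ j : Fin k, sec g j = g}

/-- The underlying function of the Hanoi Towers move `a_{ij}`: it changes the
first occurrence of `i` or `j` in a word by means of the transposition `(i j)`
and leaves the rest of the word unchanged. -/
def hanoiMoveFun {k : ℕ} (i j : Fin k) : Word k → Word k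
  | [] => []
  | x :: w => if x = i ∨ x = j then Equiv.swap i j x :: w else x :: hanoiMoveFun i j w

theorem hanoiMoveFun_involutive {k : ℕ} (i j : Fin k) :
    Function.Involutive (hanoiMoveFun i j) := by
  intro w
  induction w with
  | nil => rfl
  | cons x t ih =>
    by_cases h : x = i ∨ x = j
    · have h2 : Equiv.swap i j x = i ∨ Equiv.swap i j x = j := by
        rcases h with h | h <;> subst h <;> simp
      simp only [hanoiMoveFun, if_pos h, if_pos h2, Equiv.swap_apply_self]
    · simp only [hanoiMoveFun, if_neg h, ih]

/-- The Hanoi Towers move `a_{ij}`, as a permutation of `X_k^*`: its root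
permutation is the transposition `(i j)`, its sections at `i` and `j` are
trivial and all its other sections equal `a_{ij}` itself. -/
def hanoiMove {k : ℕ} (i j : Fin k) : Equiv.Perm (Word k) :=
  (hanoiMoveFun_involutive i j).toPerm

/-- The orbit of the letter `j` under the subgroup of `Sym(X_k)` generated by
the root permutations of the elements of `T`. -/
noncomputable def orbT {k : ℕ} (T : Finset (Equiv.Perm (Word k))) (j : Fin k) : Set (Fin k) :=
  MulAction.orbit (Subgroup.closure ((fun a => rootPerm a) '' (T : Set (Equiv.Perm (Word k))))) j

/-- The set `Fix(T)` of letters fixed by the root permutation of every element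
of `T`. -/
noncomputable def fixT {k : ℕ} (T : Finset (Equiv.Perm (Word k))) : Set (Fin k) :=
  {x | ∀ s ∈ T, rootPerm s x = x}

/-- Condition (*) on a generating set `S` of Hanoi automorphisms: for every
finite `T ⊆ S` with nonempty essential set and every letter `j ∉ Fix(T)`,
the orbit of `j` misses the inactive pegs of some element of `T`. -/
noncomputable def CondStar {k : ℕ} (S : Set (Equiv.Perm (Word k))) : Prop :=
  ∀ T : Finset (Equiv.Perm (Word k)), (T : Set (Equiv.Perm (Word k))) ⊆ S →
    (⋂ s ∈ T, inactivePegs s).Nonempty →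
    ∀ j : Fin k, j ∉ fixT T →
      ∃ s ∈ T, orbT T j ∩ inactivePegs s = ∅

open Classical in
/-- `d(g)`: the least number of distinct generators occurring among all
representations of `g` having nonempty essential set. -/
noncomputable def dCount {k : ℕ} (S : Set (Equiv.Perm (Word k)))
    (g : Equiv.Perm (Word k)) : ℕ :=
  sInf {M | ∃ L, IsRepOf S L g ∧ (essSet L).Nonempty ∧ L.toFinset.card = M}

/-- `S` is fully symmetric: for every non-identity `a ∈ S` and every
`φ ∈ Sym(X_k)`, the Hanoi automorphism `φ·a` with inactive pegs `φ(Q_a)` and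
root permutation `φ ∘ σ_a ∘ φ⁻¹` again lies in `S`. -/
noncomputable def FullySymmetric {k : ℕ} (S : Set (Equiv.Perm (Word k))) : Prop :=
  ∀ a ∈ S, a ≠ 1 → ∀ φ : Equiv.Perm (Fin k), ∀ b : Equiv.Perm (Word k),
    IsHanoiWith b (φ '' inactivePegs a) →
    rootPerm b = φ * rootPerm a * φ⁻¹ → b ∈ S

/-- The family `R̲_{k,n}`: the identity together with all Hanoi automorphisms
`a` such that (1) `Q_a ⊆ {m+1, …, m+n}` for some `m`, and (2) whenever
`i ∈ Q_a` the root permutation of `a` fixes `i-1, …, i-(n-1)`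
(all peg labels mod `k`). -/
noncomputable def Runder (k n : ℕ) : Set (Equiv.Perm (Word k)) :=
  {a | a = 1 ∨ (IsHanoiAut a ∧
    (∃ m : Fin k, ∀ q ∈ inactivePegs a, ∃ t : ℕ, 1 ≤ t ∧ t ≤ n ∧
      (q : ℕ) = ((m : ℕ) + t) % k) ∧
    ∀ i ∈ inactivePegs a, ∀ x : Fin k, ∀ t : ℕ, 1 ≤ t → t ≤ n - 1 →
      ((x : ℕ) + t) % k = (i : ℕ) → rootPerm a x = x)}

/-- The family `R̄_{k,n}`: the identity together with all Hanoi automorphisms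
`a` such that (1) `Q_a ⊆ {m+1, …, m+n}` for some `m`, and (2) whenever
`i ∈ Q_a` the root permutation of `a` fixes `i+1, …, i+(n-1)`
(all peg labels mod `k`). -/
noncomputable def Rover (k n : ℕ) : Set (Equiv.Perm (Word k)) :=
  {a | a = 1 ∨ (IsHanoiAut a ∧
    (∃ m : Fin k, ∀ q ∈ inactivePegs a, ∃ t : ℕ, 1 ≤ t ∧ t ≤ n ∧
      (q : ℕ) = ((m : ℕ) + t) % k) ∧
    ∀ i ∈ inactivePegs a, ∀ x : Fin k, ∀ t : ℕ, 1 ≤ t → t ≤ n - 1 →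
      (x : ℕ) = ((i : ℕ) + t) % k → rootPerm a x = x)}

/-- The finite word `x_m … x_1` (first letter `x_m`) read off from a
left-infinite sequence `… x_2 x_1`, encoded as `x : ℕ → Fin k` with
`x s = x_{s+1}`. -/
def wordOf {k : ℕ} (x : ℕ → Fin k) (m : ℕ) : Word k := (List.range m).reverse.map x

variable {k : ℕ}

lemma isTreeAut_one : IsTreeAut (1 : Equiv.Perm (Word k)) := by
  constructor <;> simp

lemma isTreeAut_mul {a b : Equiv.Perm (Word k)} (ha : IsTreeAut a) (hb : IsTreeAut b) :
    IsTreeAut (a * b) := by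
  refine ⟨fun w => ?_, fun w v n h => ?_⟩
  · rw [Equiv.Perm.mul_apply, ha.1, hb.1]
  · rw [Equiv.Perm.mul_apply, Equiv.Perm.mul_apply]
    exact ha.2 _ _ n (hb.2 _ _ n h)

lemma take_apply {e : Equiv.Perm (Word k)} (he : IsTreeAut e) (z : Word k) (n : ℕ)
    (hn : n ≤ z.length) : (e z).take n = e (z.take n) := by
  have h1 : (e z).take n = (e (z.take n)).take n := he.2 _ _ n (by rw [List.take_take, min_self])
  have h2 : (e (z.take n)).length = n := by rw [he.1, List.length_take, min_eq_left hn]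
  rw [h1, List.take_of_length_le (le_of_eq h2)]

lemma isTreeAut_inv {e : Equiv.Perm (Word k)} (he : IsTreeAut e) : IsTreeAut e⁻¹ := by
  have hlen : ∀ w : Word k, (e⁻¹ w).length = w.length := by
    intro w
    conv_rhs => rw [← Equiv.Perm.one_apply w, ← mul_inv_cancel e, Equiv.Perm.mul_apply, he.1]
  refine ⟨hlen, fun w v n h => ?_⟩
  rcases le_or_gt n w.length with hw | hw
  · have hv : n ≤ v.length := by
      have hmin := congrArg List.length h
      simp only [List.length_take] at hmin
      omega
    have h1 : e ((e⁻¹ w).take n) = w.take n := by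
      rw [← take_apply he _ n (by rw [hlen]; exact hw), ← Equiv.Perm.mul_apply e e⁻¹ w, mul_inv_cancel,
        Equiv.Perm.one_apply]
    have h2 : e ((e⁻¹ v).take n) = v.take n := by
      rw [← take_apply he _ n (by rw [hlen]; exact hv), ← Equiv.Perm.mul_apply e e⁻¹ v, mul_inv_cancel,
        Equiv.Perm.one_apply]
    apply e.injective
    rw [h1, h2, h]
  · have hmin := congrArg List.length h
    simp only [List.length_take] at hmin
    rcases le_or_gt n v.length with hv | hv
    · omega
    · have : w = v := by
        rw [← List.take_of_length_le hw.le, ← List.take_of_length_le hv.le, h]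
      rw [this]


lemma exists_single {e : Equiv.Perm (Word k)} (he : IsTreeAut e) (x : Fin k) :
    ∃ a, e [x] = [a] := by
  have h : (e [x]).length = 1 := by rw [he.1]; rfl
  exact List.length_eq_one_iff.mp h

lemma apply_single {e : Equiv.Perm (Word k)} (he : IsTreeAut e) (x : Fin k) :
    e [x] = [((e [x]).head?.getD x)] := by
  obtain ⟨a, ha⟩ := exists_single he x
  rw [ha]; rfl

lemma headFun_bij {e : Equiv.Perm (Word k)} (he : IsTreeAut e) :
    Function.Bijective (fun x : Fin k => ((e [x]).head?.getD x)) := by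
  constructor
  · intro x y hxy
    have h : e [x] = e [y] := by
      rw [apply_single he x, apply_single he y]
      simpa using hxy
    simpa using e.injective h
  · intro y
    obtain ⟨z, hz⟩ := e.surjective [y]
    have hlen : z.length = 1 := by
      have h := he.1 z; rw [hz] at h; simpa using h.symm
    obtain ⟨x, rfl⟩ := List.length_eq_one_iff.mp hlen
    refine ⟨x, ?_⟩
    show ((e [x]).head?.getD x) = y
    rw [hz]
    rfl

lemma rootPerm_single {e : Equiv.Perm (Word k)} (he : IsTreeAut e) (x : Fin k) :
    e [x] = [rootPerm e x] := by
  unfold rootPerm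
  rw [dif_pos (headFun_bij he)]
  exact apply_single he x

lemma cons_head {e : Equiv.Perm (Word k)} (he : IsTreeAut e) (x : Fin k) (w : Word k) :
    e (x :: w) = rootPerm e x :: (e (x :: w)).tail := by
  have h1 : (e (x :: w)).take 1 = (e [x]).take 1 := he.2 _ _ 1 rfl
  rw [rootPerm_single he] at h1
  cases hc : e (x :: w) with
  | nil =>
    have h := he.1 (x :: w); rw [hc] at h; simp at h
  | cons a t =>
    rw [hc] at h1
    have h1' : a = rootPerm e x := by simpa using h1
    simp [h1']

lemma secFun_bij {e : Equiv.Perm (Word k)} (he : IsTreeAut e) (x : Fin k) :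
    Function.Bijective (fun w : Word k => (e (x :: w)).tail) := by
  constructor
  · intro w v hwv
    simp only at hwv
    have h : e (x :: w) = e (x :: v) := by
      rw [cons_head he x w, cons_head he x v, hwv]
    simpa using e.injective h
  · intro u
    obtain ⟨z, hz⟩ := e.surjective (rootPerm e x :: u)
    cases z with
    | nil =>
      have h := he.1 ([] : Word k); rw [hz] at h; simp at h
    | cons y w =>
      have hh := cons_head he y w
      rw [hz] at hh
      simp only [List.cons.injEq] at hh
      have hyx : y = x := (rootPerm e).injective hh.1.symm
      refine ⟨w, ?_⟩
      show (e (x :: w)).tail = u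
      rw [← hyx, hz]
      rfl

lemma sec_apply {e : Equiv.Perm (Word k)} (he : IsTreeAut e) (x : Fin k) (w : Word k) :
    sec e x w = (e (x :: w)).tail := by
  unfold sec
  rw [dif_pos (secFun_bij he x)]
  rfl

lemma fund {e : Equiv.Perm (Word k)} (he : IsTreeAut e) (x : Fin k) (w : Word k) :
    e (x :: w) = rootPerm e x :: sec e x w := by
  rw [sec_apply he]
  exact cons_head he x w

lemma rootPerm_sec_mul {a b : Equiv.Perm (Word k)} (ha : IsTreeAut a) (hb : IsTreeAut b)
    (x : Fin k) :
    rootPerm (a * b) x = rootPerm a (rootPerm b x) ∧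
      sec (a * b) x = sec a (rootPerm b x) * sec b x := by
  have hab := isTreeAut_mul ha hb
  have key : ∀ w, rootPerm (a * b) x :: sec (a * b) x w
      = rootPerm a (rootPerm b x) :: sec a (rootPerm b x) (sec b x w) := by
    intro w
    rw [← fund hab x w, Equiv.Perm.mul_apply, fund hb x w,
      fund ha (rootPerm b x) (sec b x w)]
  have h1 := key []
  simp only [List.cons.injEq] at h1
  refine ⟨h1.1, Equiv.ext fun w => ?_⟩
  have h2 := key w
  simp only [List.cons.injEq] at h2
  rw [Equiv.Perm.mul_apply]
  exact h2.2

lemma rootPerm_one (x : Fin k) : rootPerm (1 : Equiv.Perm (Word k)) x = x := by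
  have h := rootPerm_single (isTreeAut_one (k := k)) x
  simpa using h.symm

lemma sec_one (x : Fin k) : sec (1 : Equiv.Perm (Word k)) x = 1 := by
  refine Equiv.ext fun w => ?_
  rw [sec_apply (isTreeAut_one (k := k))]
  rfl

lemma rootPerm_inv_right {a : Equiv.Perm (Word k)} (ha : IsTreeAut a) (x : Fin k) :
    rootPerm a (rootPerm a⁻¹ x) = x := by
  have h := (rootPerm_sec_mul ha (isTreeAut_inv ha) x).1
  rw [mul_inv_cancel, rootPerm_one] at h
  exact h.symm

lemma rootPerm_inv_left {a : Equiv.Perm (Word k)} (ha : IsTreeAut a) (x : Fin k) :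
    rootPerm a⁻¹ (rootPerm a x) = x := by
  have h := (rootPerm_sec_mul (isTreeAut_inv ha) ha x).1
  rw [inv_mul_cancel, rootPerm_one] at h
  exact h.symm

lemma sec_inv {a : Equiv.Perm (Word k)} (ha : IsTreeAut a) (x : Fin k) :
    sec a⁻¹ x = (sec a (rootPerm a⁻¹ x))⁻¹ := by
  have h := (rootPerm_sec_mul ha (isTreeAut_inv ha) x).2
  rw [mul_inv_cancel, sec_one] at h
  exact (inv_eq_of_mul_eq_one_right h.symm).symm

lemma hanoiWith_unique {a : Equiv.Perm (Word k)} {Q Q' : Set (Fin k)} (hna : a ≠ 1)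
    (h : IsHanoiWith a Q) (h' : IsHanoiWith a Q') : Q = Q' := by
  ext j
  constructor
  · intro hj
    by_contra hj'
    exact hna (by rw [← h.2.2.1 j hj, h'.2.1 j hj'])
  · intro hj
    by_contra hj'
    exact hna (by rw [← h'.2.2.1 j hj, h.2.1 j hj'])

lemma inactivePegs_eq {a : Equiv.Perm (Word k)} {Q : Set (Fin k)} (hna : a ≠ 1)
    (h : IsHanoiWith a Q) : inactivePegs a = Q := by
  have hex : ∃ Q, IsHanoiWith a Q := ⟨Q, h⟩
  unfold inactivePegs
  rw [if_neg hna, dif_pos hex]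
  exact hanoiWith_unique hna hex.choose_spec h

lemma inactivePegs_spec {a : Equiv.Perm (Word k)} {j : Fin k} (hj : j ∈ inactivePegs a) :
    sec a j = a ∧ rootPerm a j = j := by
  by_cases hna : a = 1
  · subst hna; exact ⟨sec_one j, rootPerm_one j⟩
  · by_cases hex : ∃ Q, IsHanoiWith a Q
    · have hspec := hex.choose_spec
      rw [inactivePegs_eq hna hspec] at hj
      exact ⟨hspec.2.2.1 j hj, hspec.2.2.2 j hj⟩
    · exfalso
      unfold inactivePegs at hj
      rw [if_neg hna, dif_neg hex] at hj
      exact hj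

lemma hanoiWith_inv {a : Equiv.Perm (Word k)} {Q : Set (Fin k)} (h : IsHanoiWith a Q) :
    IsHanoiWith a⁻¹ Q := by
  have ha := h.1
  refine ⟨isTreeAut_inv ha, ?_, ?_, ?_⟩
  · intro i hi
    have hni : rootPerm a⁻¹ i ∉ Q := by
      intro hmem
      have hfix := h.2.2.2 _ hmem
      rw [rootPerm_inv_right ha] at hfix
      rw [← hfix] at hmem
      exact hi hmem
    rw [sec_inv ha, h.2.1 _ hni, inv_one]
  · intro j hj
    have hfix : rootPerm a⁻¹ j = j := by
      conv_lhs => rw [← h.2.2.2 j hj]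
      exact rootPerm_inv_left ha j
    rw [sec_inv ha, hfix, h.2.2.1 j hj]
  · intro j hj
    conv_lhs => rw [← h.2.2.2 j hj]
    exact rootPerm_inv_left ha j

/-- A convenient package: `s` is a tree automorphism whose sections obey the
Hanoi dichotomy with respect to `inactivePegs s`. -/
def Good (s : Equiv.Perm (Word k)) : Prop :=
  IsTreeAut s ∧ ∀ x : Fin k,
    (sec s x = 1 ∧ x ∉ inactivePegs s) ∨
    (sec s x = s ∧ x ∈ inactivePegs s ∧ rootPerm s x = x)

lemma good_of_hanoiWith {a : Equiv.Perm (Word k)} {Q : Set (Fin k)}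
    (h : IsHanoiWith a Q) : Good a := by
  refine ⟨h.1, fun x => ?_⟩
  by_cases hna : a = 1
  · subst hna
    right
    refine ⟨sec_one x, ?_, rootPerm_one x⟩
    unfold inactivePegs
    rw [if_pos rfl]
    trivial
  · rw [inactivePegs_eq hna h]
    by_cases hx : x ∈ Q
    · exact Or.inr ⟨h.2.2.1 x hx, hx, h.2.2.2 x hx⟩
    · exact Or.inl ⟨h.2.1 x hx, hx⟩

lemma good_of_gen {S : Set (Equiv.Perm (Word k))} (hS : ∀ a ∈ S, IsHanoiAut a)
    {s : Equiv.Perm (Word k)} (hs : s ∈ S ∨ s⁻¹ ∈ S) : Good s := by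
  rcases hs with hs | hs
  · obtain ⟨Q, hQ⟩ := hS s hs
    exact good_of_hanoiWith hQ
  · obtain ⟨Q, hQ⟩ := hS s⁻¹ hs
    have h2 := hanoiWith_inv hQ
    rw [inv_inv] at h2
    exact good_of_hanoiWith h2

lemma isTreeAut_prod {L : List (Equiv.Perm (Word k))} (hL : ∀ s ∈ L, IsTreeAut s) :
    IsTreeAut L.prod := by
  induction L with
  | nil => rw [List.prod_nil]; exact isTreeAut_one
  | cons s L ih =>
    rw [List.prod_cons]
    exact isTreeAut_mul (hL s List.mem_cons_self)
      (ih fun t ht => hL t (List.mem_cons_of_mem _ ht))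

lemma sec_prod_essSet {L : List (Equiv.Perm (Word k))} (hL : ∀ s ∈ L, IsTreeAut s)
    {x : Fin k} (hx : x ∈ essSet L) :
    sec L.prod x = L.prod ∧ rootPerm L.prod x = x := by
  induction L with
  | nil => rw [List.prod_nil]; exact ⟨sec_one x, rootPerm_one x⟩
  | cons s L ih =>
    simp only [essSet, Set.mem_iInter] at hx
    have hxs : x ∈ inactivePegs s := hx s List.mem_cons_self
    have hxL : x ∈ essSet L := by
      simp only [essSet, Set.mem_iInter]
      exact fun t ht => hx t (List.mem_cons_of_mem _ ht)
    obtain ⟨hsec, hroot⟩ := ih (fun t ht => hL t (List.mem_cons_of_mem _ ht)) hxL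
    have hs := hL s List.mem_cons_self
    have hP := isTreeAut_prod fun t ht => hL t (List.mem_cons_of_mem _ ht)
    obtain ⟨hsx, hrx⟩ := inactivePegs_spec hxs
    obtain ⟨hr, hse⟩ := rootPerm_sec_mul hs hP x
    rw [List.prod_cons]
    constructor
    · rw [hse, hroot, hsx, hsec]
    · rw [hr, hroot, hrx]

lemma sec_prod_sublist {L : List (Equiv.Perm (Word k))} (hL : ∀ s ∈ L, Good s) (x : Fin k) :
    ∃ L' : List (Equiv.Perm (Word k)), L'.Sublist L ∧ L'.prod = sec L.prod x ∧
      (L'.length = L.length → x ∈ essSet L ∧ rootPerm L.prod x = x) := by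
  induction L with
  | nil =>
    refine ⟨[], List.Sublist.refl _, ?_, fun _ => ⟨?_, ?_⟩⟩
    · rw [List.prod_nil, sec_one]
    · simp [essSet]
    · rw [List.prod_nil]; exact rootPerm_one x
  | cons s L ih =>
    obtain ⟨L', hsub, hprod, hlen⟩ := ih fun t ht => hL t (List.mem_cons_of_mem _ ht)
    have hs : Good s := hL s List.mem_cons_self
    have hP : IsTreeAut L.prod := isTreeAut_prod fun t ht => (hL t (List.mem_cons_of_mem _ ht)).1
    obtain ⟨hr, hse⟩ := rootPerm_sec_mul hs.1 hP x
    rcases hs.2 (rootPerm L.prod x) with ⟨h1, h2⟩ | ⟨h1, h2, h3⟩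
    · refine ⟨L', hsub.cons s, ?_, ?_⟩
      · rw [List.prod_cons, hse, h1, one_mul, hprod]
      · intro hlen'
        exfalso
        have hle := hsub.length_le
        simp only [List.length_cons] at hlen'
        omega
    · refine ⟨s :: L', hsub.cons₂ s, ?_, ?_⟩
      · rw [List.prod_cons, List.prod_cons, hse, h1, hprod]
      · intro hlen'
        simp only [List.length_cons] at hlen'
        obtain ⟨hess, hfix⟩ := hlen (by omega)
        rw [hfix] at h2 h3
        refine ⟨?_, ?_⟩
        · simp only [essSet, Set.mem_iInter] at hess ⊢
          intro t ht
          rcases List.mem_cons.mp ht with rfl | ht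
          · exact h2
          · exact hess t ht
        · rw [List.prod_cons, hr, hfix, h3]

lemma exists_rep {S : Set (Equiv.Perm (Word k))} {g : Equiv.Perm (Word k)}
    (hg : g ∈ Subgroup.closure S) : ∃ L, IsRepOf S L g := by
  induction hg using Subgroup.closure_induction with
  | mem s hs =>
    exact ⟨[s], fun t ht => by rw [List.mem_singleton] at ht; subst ht; exact Or.inl hs,
      List.prod_singleton⟩
  | one => exact ⟨[], fun t ht => absurd ht List.not_mem_nil, List.prod_nil⟩
  | mul a b ha hb iha ihb =>
    obtain ⟨La, hLa⟩ := iha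
    obtain ⟨Lb, hLb⟩ := ihb
    refine ⟨La ++ Lb, fun t ht => ?_, ?_⟩
    · rcases List.mem_append.mp ht with ht | ht
      · exact hLa.1 t ht
      · exact hLb.1 t ht
    · rw [List.prod_append, hLa.2, hLb.2]
  | inv a ha iha =>
    obtain ⟨L, hL⟩ := iha
    refine ⟨(L.map fun t => t⁻¹).reverse, fun t ht => ?_, ?_⟩
    · rw [List.mem_reverse, List.mem_map] at ht
      obtain ⟨u, hu, rfl⟩ := ht
      rcases hL.1 u hu with h' | h'
      · right; rw [inv_inv]; exact h'
      · left; exact h'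
    · rw [← List.prod_inv_reverse, hL.2]

lemma exists_min_rep {S : Set (Equiv.Perm (Word k))} {g : Equiv.Perm (Word k)}
    (hg : g ∈ Subgroup.closure S) :
    ∃ L, IsRepOf S L g ∧ ∀ L', IsRepOf S L' g → L.length ≤ L'.length := by
  obtain ⟨L0, hL0⟩ := exists_rep hg
  have hne : {n | ∃ L, IsRepOf S L g ∧ L.length = n}.Nonempty := ⟨L0.length, L0, hL0, rfl⟩
  obtain ⟨L, hL, hlen⟩ := Nat.sInf_mem hne
  exact ⟨L, hL, fun L' hL' => hlen ▸ Nat.sInf_le ⟨L', hL', rfl⟩⟩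

lemma rep_mem {S : Set (Equiv.Perm (Word k))} {L : List (Equiv.Perm (Word k))}
    (h : ∀ s ∈ L, s ∈ S ∨ s⁻¹ ∈ S) : L.prod ∈ Subgroup.closure S := by
  refine Subgroup.list_prod_mem _ fun s hs => ?_
  rcases h s hs with h' | h'
  · exact Subgroup.subset_closure h'
  · have h2 := (Subgroup.closure S).inv_mem (Subgroup.subset_closure h')
    rwa [inv_inv] at h2

lemma essSet_sublist {L L' : List (Equiv.Perm (Word k))} (h : L'.Sublist L) :
    essSet L ⊆ essSet L' := by
  intro x hx
  simp only [essSet, Set.mem_iInter] at hx ⊢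
  exact fun t ht => hx t (h.subset ht)

/-- Proposition: characterizations of the prenucleus.
For `g` in a `k`-peg Hanoi group `G` generated by `S`, the following are
equivalent: (1) `g|_j = g` for some letter `j`; (2) some representation of `g`
has nonempty essential set; (3) every minimal representation of `g` has
nonempty essential set.  Moreover the prenucleus of `G` is state-closed. -/
theorem prenucleus_characterization {k : ℕ} (S : Set (Equiv.Perm (Word k)))
    (hS1 : (1 : Equiv.Perm (Word k)) ∈ S) (hS : ∀ a ∈ S, IsHanoiAut a)
    (g : Equiv.Perm (Word k)) (hg : g ∈ Subgroup.closure S) :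
    ((∃ j : Fin k, sec g j = g) ↔ ∃ L, IsRepOf S L g ∧ (essSet L).Nonempty) ∧
    ((∃ j : Fin k, sec g j = g) ↔
      ∀ L, IsRepOf S L g → (∀ L', IsRepOf S L' g → L.length ≤ L'.length) →
        (essSet L).Nonempty) ∧
    (g ∈ preNucleus (Subgroup.closure S) →
      ∀ j : Fin k, sec g j ∈ preNucleus (Subgroup.closure S)) := by
  obtain ⟨Lm, hLm, hmin⟩ := exists_min_rep hg
  have hLmgood : ∀ s ∈ Lm, Good s := fun s hs => good_of_gen hS (hLm.1 s hs)
  have h21 : (∃ L, IsRepOf S L g ∧ (essSet L).Nonempty) → ∃ j : Fin k, sec g j = g := by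
    rintro ⟨L, hL, j, hj⟩
    have hT : ∀ s ∈ L, IsTreeAut s := fun s hs => (good_of_gen hS (hL.1 s hs)).1
    have hsec := (sec_prod_essSet hT hj).1
    rw [hL.2] at hsec
    exact ⟨j, hsec⟩
  have h13 : (∃ j : Fin k, sec g j = g) → ∀ L, IsRepOf S L g →
      (∀ L', IsRepOf S L' g → L.length ≤ L'.length) → (essSet L).Nonempty := by
    rintro ⟨j, hj⟩ L hL hLmin
    have hgood : ∀ s ∈ L, Good s := fun s hs => good_of_gen hS (hL.1 s hs)
    obtain ⟨L', hsub, hprod, hcase⟩ := sec_prod_sublist hgood j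
    rw [hL.2, hj] at hprod
    have hrep' : IsRepOf S L' g := ⟨fun s hs => hL.1 s (hsub.subset hs), hprod⟩
    exact ⟨j, (hcase (le_antisymm hsub.length_le (hLmin L' hrep'))).1⟩
  refine ⟨⟨fun h1 => ⟨Lm, hLm, h13 h1 Lm hLm hmin⟩, h21⟩,
    ⟨h13, fun h3 => h21 ⟨Lm, hLm, h3 Lm hLm hmin⟩⟩, ?_⟩
  rintro ⟨hgmem, j', hj'⟩ j
  obtain ⟨j0, hj0⟩ : (essSet Lm).Nonempty := h13 ⟨j', hj'⟩ Lm hLm hmin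
  obtain ⟨L', hsub, hprod, -⟩ := sec_prod_sublist hLmgood j
  rw [hLm.2] at hprod
  have hj0' : j0 ∈ essSet L' := essSet_sublist hsub hj0
  have hT' : ∀ s ∈ L', IsTreeAut s := fun s hs => (hLmgood s (hsub.subset hs)).1
  have hsec := (sec_prod_essSet hT' hj0').1
  rw [hprod] at hsec
  refine ⟨?_, j0, hsec⟩
  rw [← hprod]
  exact rep_mem fun s hs => hLm.1 s (hsub.subset hs)

end Hanoi
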